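/- (Proposition 2.) Let A₁ = exp(X) with X ~ N(μ, σ²), σ > 0, let d₂ > 0, and let μ̃ := ½ ln((e + d₂)⁴/(w + (e + d₂)²)), σ̃ := √(ln(w/(e + d₂)² + 1)) with e := exp(μ + σ²/2), w := exp(2μ + σ²)(exp(σ²) − 1), so that σ̃ < σ. With f(x) := (x − d₂)^σ̃ / x^σ on (d₂, ∞) and c := exp(σ̃μ − σμ̃), there exist unique d₁*, d₁** with d₂ < d₁* < σd₂/(σ − σ̃) < d₁** such that f(d₁*) = f(d₁**) = c; and for every d₁ > d₂, the moment-matched lognormal model underestimates the limiting default probability of firm 1 under cross-ownership of debt only, i.e. Φ((ln d₁ − μ̃)/σ̃) < Φ((ln(d₁ − d₂) − μ)/σ), if and only if d₁* < d₁ < d₁**. -/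

import Mathlib

/-- The standard normal distribution function `Φ`. -/
noncomputable def stdNormalCdf (x : ℝ) : ℝ :=
  ((ProbabilityTheory.gaussianReal 0 1) (Set.Iic x)).toReal

open MeasureTheory ProbabilityTheory Real Set
open scoped ENNReal

namespace Prop2Aux

lemma phi_eq (x : ℝ) :
    stdNormalCdf x = ∫ t in Set.Iic x, gaussianPDFReal 0 1 t := by
  rw [stdNormalCdf, gaussianReal_apply_eq_integral _ one_ne_zero,
    ENNReal.toReal_ofReal]
  exact integral_nonneg_of_ae (ae_of_all _ fun t => gaussianPDFReal_nonneg 0 1 t)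

lemma pdf_cont : Continuous (gaussianPDFReal 0 1) := by
  rw [gaussianPDFReal_def]; fun_prop

lemma phi_nonneg (x : ℝ) : 0 ≤ stdNormalCdf x := ENNReal.toReal_nonneg

lemma phi_le_one (x : ℝ) : stdNormalCdf x ≤ 1 := by
  rw [stdNormalCdf]
  have := prob_le_one (μ := gaussianReal 0 1) (s := Set.Iic x)
  exact ENNReal.toReal_le_of_le_ofReal one_pos.le (by simpa using this)

lemma phi_strictMono : StrictMono stdNormalCdf := by
  intro x y hxy
  rw [phi_eq, phi_eq]
  have hint : ∀ z : ℝ, IntegrableOn (gaussianPDFReal 0 1) (Set.Iic z) := fun z =>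
    (integrable_gaussianPDFReal 0 1).integrableOn
  have hsplit : ∫ t in Set.Iic y, gaussianPDFReal 0 1 t
      = (∫ t in Set.Iic x, gaussianPDFReal 0 1 t)
        + ∫ t in Set.Ioc x y, gaussianPDFReal 0 1 t := by
    rw [← setIntegral_union (Set.Iic_disjoint_Ioc le_rfl) measurableSet_Ioc (hint x)
      ((integrable_gaussianPDFReal 0 1).integrableOn), Set.Iic_union_Ioc_eq_Iic hxy.le]
  rw [hsplit]
  have hpos : 0 < ∫ t in Set.Ioc x y, gaussianPDFReal 0 1 t := by
    rw [← intervalIntegral.integral_of_le hxy.le]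
    exact intervalIntegral.intervalIntegral_pos_of_pos_on
      (pdf_cont.intervalIntegrable x y) (fun t _ => gaussianPDFReal_pos 0 1 t one_ne_zero) hxy
  linarith

lemma phi_mono : Monotone stdNormalCdf := phi_strictMono.monotone

lemma phi_pos (x : ℝ) : 0 < stdNormalCdf x := by
  have h : stdNormalCdf (x - 1) < stdNormalCdf x := phi_strictMono (by linarith)
  linarith [phi_nonneg (x - 1)]

lemma phi_measurable : Measurable stdNormalCdf := phi_mono.measurable

lemma gauss_Ioi (c : ℝ) :
    (gaussianReal 0 1) (Set.Ioi c) = ENNReal.ofReal (1 - stdNormalCdf c) := by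
  have h1 : (gaussianReal 0 1) (Set.Iic c) ≠ ⊤ := measure_ne_top _ _
  have hc : Set.Ioi c = (Set.Iic c)ᶜ := by rw [Set.compl_Iic]
  rw [hc, measure_compl measurableSet_Iic h1]
  have h2 : (gaussianReal 0 1) (Set.Iic c) = ENNReal.ofReal (stdNormalCdf c) := by
    rw [stdNormalCdf, ENNReal.ofReal_toReal h1]
  rw [h2, measure_univ, ← ENNReal.ofReal_one, ENNReal.ofReal_sub _ (phi_nonneg c)]

lemma pdf_shift (m s x : ℝ) :
    gaussianPDFReal 0 1 x * Real.exp (m + s * x)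
      = Real.exp (m + s^2/2) * gaussianPDFReal s 1 x := by
  simp only [gaussianPDFReal, NNReal.coe_one, mul_one, sub_zero]
  rw [mul_assoc, mul_comm (Real.exp (m + s^2/2)), mul_assoc, ← Real.exp_add, ← Real.exp_add]
  ring_nf

lemma mgf_gauss (m s : ℝ) :
    ∫⁻ x, ENNReal.ofReal (Real.exp (m + s * x)) ∂(gaussianReal 0 1)
      = ENNReal.ofReal (Real.exp (m + s^2/2)) := by
  rw [gaussianReal_of_var_ne_zero _ one_ne_zero,
    lintegral_withDensity_eq_lintegral_mul _ (measurable_gaussianPDF 0 1) (by fun_prop)]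
  have h : ∀ x, (gaussianPDF 0 1 * fun x => ENNReal.ofReal (Real.exp (m + s * x))) x
      = ENNReal.ofReal (Real.exp (m + s^2/2)) * gaussianPDF s 1 x := by
    intro x
    simp only [Pi.mul_apply, gaussianPDF]
    rw [← ENNReal.ofReal_mul (gaussianPDFReal_nonneg 0 1 x),
      ← ENNReal.ofReal_mul (Real.exp_pos _).le, pdf_shift]
  rw [lintegral_congr h, lintegral_const_mul _ (measurable_gaussianPDF s 1),
    lintegral_gaussianPDF_eq_one s one_ne_zero, mul_one]

lemma tail_lintegral (m s : ℝ) (hs : 0 < s) :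
    ∫⁻ t in Set.Ioi (0:ℝ), ENNReal.ofReal (1 - stdNormalCdf ((Real.log t - m)/s))
      = ENNReal.ofReal (Real.exp (m + s^2/2)) := by
  have key := lintegral_eq_lintegral_meas_lt (gaussianReal 0 1)
    (f := fun x => Real.exp (m + s * x)) (ae_of_all _ fun x => (Real.exp_pos _).le)
    (by fun_prop)
  rw [← mgf_gauss m s, key]
  refine setLIntegral_congr_fun measurableSet_Ioi (fun t ht => ?_)
  have hset : {x : ℝ | t < Real.exp (m + s * x)} = Set.Ioi ((Real.log t - m)/s) := by
    ext x
    simp only [Set.mem_setOf_eq, Set.mem_Ioi]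
    rw [← Real.log_lt_iff_lt_exp ht, div_lt_iff₀ hs]
    constructor <;> intro h <;> nlinarith
  rw [hset, gauss_Ioi]

lemma shift_lint (d : ℝ) (g : ℝ → ℝ≥0∞) (hg : Measurable g) :
    ∫⁻ t in Set.Ioi d, g (t - d) = ∫⁻ u in Set.Ioi (0:ℝ), g u := by
  have hmap : (volume : Measure ℝ).restrict (Set.Ioi d)
      = Measure.map (· + d) ((volume : Measure ℝ).restrict (Set.Ioi (0:ℝ))) := by
    have h1 : Measure.map (· + d) (volume : Measure ℝ) = volume :=
      Measure.IsAddRightInvariant.map_add_right_eq_self d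
    have h2 := Measure.restrict_map (measurable_add_const d) (measurableSet_Ioi (a := d))
      (μ := (volume : Measure ℝ))
    rw [h1] at h2
    have h3 : (· + d) ⁻¹' Set.Ioi d = Set.Ioi (0:ℝ) := by
      ext u; simp [Set.mem_Ioi]
    rw [h2, h3]
  rw [hmap, lintegral_map (f := fun t => g (t - d)) (by fun_prop) (measurable_add_const d)]
  simp

section Core
variable {σ σt d₂ L : ℝ}

lemma gl_deriv (hd₂ : 0 < d₂) {x : ℝ} (hx : d₂ < x) :
    HasDerivAt (fun x => σt * Real.log (x - d₂) - σ * Real.log x)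
      (σt * (x - d₂)⁻¹ - σ * x⁻¹) x := by
  have hx0 : (0:ℝ) < x := hd₂.trans hx
  have h1 : HasDerivAt (fun x : ℝ => x - d₂) 1 x := (hasDerivAt_id x).sub_const d₂
  have h2 : HasDerivAt (fun x : ℝ => Real.log (x - d₂)) ((x - d₂)⁻¹ * 1) x :=
    by simpa using h1.log (sub_ne_zero.2 hx.ne')
  have h3 : HasDerivAt Real.log x⁻¹ x := Real.hasDerivAt_log hx0.ne'
  have := (h2.const_mul σt).sub (h3.const_mul σ); rw [mul_one] at this; exact this

lemma gl_cont (hd₂ : 0 < d₂) {s : Set ℝ} (hs : s ⊆ Set.Ioi d₂) :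
    ContinuousOn (fun x => σt * Real.log (x - d₂) - σ * Real.log x) s := fun x hx =>
  ((gl_deriv (σ := σ) (σt := σt) hd₂ (hs hx)).continuousAt).continuousWithinAt

lemma gl_mono (hσ : 0 < σ) (hσt : 0 < σt) (hlt : σt < σ) (hd₂ : 0 < d₂) :
    StrictMonoOn (fun x => σt * Real.log (x - d₂) - σ * Real.log x)
      (Set.Ioc d₂ (σ * d₂ / (σ - σt))) := by
  have hss : (0:ℝ) < σ - σt := sub_pos.2 hlt
  apply strictMonoOn_of_deriv_pos (convex_Ioc _ _) (gl_cont hd₂ (fun x hx => hx.1))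
  intro x hx
  rw [interior_Ioc] at hx
  rw [(gl_deriv hd₂ hx.1).deriv, sub_pos]
  have hx0 : (0:ℝ) < x := hd₂.trans hx.1
  have hxd : (0:ℝ) < x - d₂ := sub_pos.2 hx.1
  have hx2 : x * (σ - σt) < σ * d₂ := by
    have h := hx.2; rw [lt_div_iff₀ hss] at h; linarith
  rw [← div_eq_mul_inv, ← div_eq_mul_inv, div_lt_div_iff₀ hx0 hxd]
  nlinarith

lemma gl_anti (hσ : 0 < σ) (hσt : 0 < σt) (hlt : σt < σ) (hd₂ : 0 < d₂) :
    StrictAntiOn (fun x => σt * Real.log (x - d₂) - σ * Real.log x)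
      (Set.Ici (σ * d₂ / (σ - σt))) := by
  have hss : (0:ℝ) < σ - σt := sub_pos.2 hlt
  have hd₂x : d₂ < σ * d₂ / (σ - σt) := by rw [lt_div_iff₀ hss]; nlinarith
  apply strictAntiOn_of_deriv_neg (convex_Ici _)
    (gl_cont hd₂ (fun x hx => lt_of_lt_of_le hd₂x hx))
  intro x hx
  rw [interior_Ici] at hx
  have hx1 : d₂ < x := hd₂x.trans hx
  rw [(gl_deriv hd₂ hx1).deriv, sub_neg]
  have hx0 : (0:ℝ) < x := hd₂.trans hx1
  have hxd : (0:ℝ) < x - d₂ := sub_pos.2 hx1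
  have hx2 : σ * d₂ < x * (σ - σt) := by
    have h := hx; rw [Set.mem_Ioi, div_lt_iff₀ hss] at h; linarith
  rw [← div_eq_mul_inv, ← div_eq_mul_inv, div_lt_div_iff₀ hxd hx0]
  nlinarith

lemma core (hσ : 0 < σ) (hσt : 0 < σt) (hlt : σt < σ) (hd₂ : 0 < d₂)
    (hex : ∃ q, d₂ < q ∧ L < σt * Real.log (q - d₂) - σ * Real.log q) :
    ∃ a b : ℝ, d₂ < a ∧ a < σ * d₂ / (σ - σt) ∧ σ * d₂ / (σ - σt) < b ∧
      σt * Real.log (a - d₂) - σ * Real.log a = L ∧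
      σt * Real.log (b - d₂) - σ * Real.log b = L ∧
      (∀ a', d₂ < a' → a' < σ * d₂ / (σ - σt) →
        σt * Real.log (a' - d₂) - σ * Real.log a' = L → a' = a) ∧
      (∀ b', σ * d₂ / (σ - σt) < b' →
        σt * Real.log (b' - d₂) - σ * Real.log b' = L → b' = b) ∧
      (∀ x, d₂ < x → (L < σt * Real.log (x - d₂) - σ * Real.log x ↔ a < x ∧ x < b)) := by
  set gl := fun x => σt * Real.log (x - d₂) - σ * Real.log x with hgl
  set x₀ := σ * d₂ / (σ - σt) with hx₀
  have hss : (0:ℝ) < σ - σt := sub_pos.2 hlt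
  have hd₂x : d₂ < x₀ := by rw [hx₀, lt_div_iff₀ hss]; nlinarith
  have hmono := gl_mono hσ hσt hlt hd₂
  have hanti := gl_anti hσ hσt hlt hd₂
  obtain ⟨q, hq, hLq⟩ := hex
  have hmax : L < gl x₀ := by
    rcases le_or_gt q x₀ with h | h
    · rcases eq_or_lt_of_le h with rfl | h'
      · exact hLq
      · exact hLq.trans_le (hmono ⟨hq, h⟩ ⟨hd₂x, le_rfl⟩ h').le
    · exact hLq.trans_le (hanti (Set.mem_Ici.2 le_rfl) (Set.mem_Ici.2 h.le) h).le
  obtain ⟨l, hl1, hl2, hlL⟩ : ∃ l, d₂ < l ∧ l < x₀ ∧ gl l < L := by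
    set K := (L + σ * Real.log d₂) / σt with hK
    set δ := min ((x₀ - d₂) / 2) (Real.exp (K - 1)) with hδ
    have hδ0 : 0 < δ := lt_min (by linarith) (Real.exp_pos _)
    refine ⟨d₂ + δ, by linarith, by
      have : δ ≤ (x₀ - d₂)/2 := min_le_left _ _
      linarith, ?_⟩
    have h1 : Real.log δ ≤ K - 1 := by
      calc Real.log δ ≤ Real.log (Real.exp (K - 1)) :=
            Real.log_le_log hδ0 (min_le_right _ _)
        _ = K - 1 := Real.log_exp _
    have h3 : σt * Real.log δ < L + σ * Real.log d₂ := by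
      have h : σt * Real.log δ ≤ σt * (K - 1) := by nlinarith
      rw [hK] at h
      have h4 : σt * ((L + σ * Real.log d₂) / σt - 1) = L + σ * Real.log d₂ - σt := by
        field_simp
      nlinarith
    show σt * Real.log (d₂ + δ - d₂) - σ * Real.log (d₂ + δ) < L
    have h5 : σ * Real.log d₂ ≤ σ * Real.log (d₂ + δ) := by
      have := Real.log_le_log hd₂ (by linarith : d₂ ≤ d₂ + δ)
      nlinarith
    have h6 : d₂ + δ - d₂ = δ := by ring
    rw [h6]
    linarith
  obtain ⟨r, hr1, hrL⟩ : ∃ r, x₀ < r ∧ gl r < L := by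
    set r := max (x₀ + 1) (Real.exp (L / (σt - σ) + 1)) with hr
    have hr0 : x₀ < r := lt_of_lt_of_le (by linarith) (le_max_left _ _)
    have hrd : d₂ < r := hd₂x.trans hr0
    refine ⟨r, hr0, ?_⟩
    have h1 : Real.log (r - d₂) ≤ Real.log r := Real.log_le_log (by linarith) (by linarith)
    have h2 : L / (σt - σ) + 1 ≤ Real.log r := by
      calc L / (σt - σ) + 1 = Real.log (Real.exp (L / (σt - σ) + 1)) := (Real.log_exp _).symm
        _ ≤ Real.log r := Real.log_le_log (Real.exp_pos _) (le_max_right _ _)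
    have h3 : (σt - σ) * Real.log r < L := by
      have hneg : σt - σ < 0 := by linarith
      have h : L / (σt - σ) < Real.log r := by linarith
      calc (σt - σ) * Real.log r < (σt - σ) * (L / (σt - σ)) :=
            mul_lt_mul_of_neg_left h hneg
        _ = L := by rw [mul_comm, div_mul_cancel₀ _ hneg.ne]
    have h4 : σt * Real.log (r - d₂) ≤ σt * Real.log r := mul_le_mul_of_nonneg_left h1 hσt.le
    show σt * Real.log (r - d₂) - σ * Real.log r < L
    nlinarith
  obtain ⟨a, ha_mem, haL⟩ : ∃ a ∈ Set.Ioo l x₀, gl a = L := by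
    have hsub : Set.Icc l x₀ ⊆ Set.Ioi d₂ := fun x hx => lt_of_lt_of_le hl1 hx.1
    exact intermediate_value_Ioo hl2.le (gl_cont (σ := σ) (σt := σt) hd₂ hsub) ⟨hlL, hmax⟩
  have ha1 : d₂ < a := hl1.trans ha_mem.1
  have ha2 : a < x₀ := ha_mem.2
  obtain ⟨b, hb_mem, hbL⟩ : ∃ b ∈ Set.Ioo x₀ r, gl b = L := by
    have hsub : Set.Icc x₀ r ⊆ Set.Ioi d₂ := fun x hx => lt_of_lt_of_le hd₂x hx.1
    exact intermediate_value_Ioo' hr1.le (gl_cont (σ := σ) (σt := σt) hd₂ hsub) ⟨hrL, hmax⟩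
  have hb1 : x₀ < b := hb_mem.1
  refine ⟨a, b, ha1, ha2, hb1, haL, hbL, ?_, ?_, ?_⟩
  · intro a' h1 h2 h3
    exact hmono.injOn ⟨h1, h2.le⟩ ⟨ha1, ha2.le⟩ (h3.trans haL.symm)
  · intro b' h1 h2
    exact hanti.injOn (Set.mem_Ici.2 h1.le) (Set.mem_Ici.2 hb1.le) (h2.trans hbL.symm)
  · intro x hx
    constructor
    · intro hLx
      constructor
      · by_contra hcon
        push_neg at hcon
        have h : gl x ≤ gl a := by
          rcases eq_or_lt_of_le hcon with rfl | h'
          · exact le_rfl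
          · exact (hmono ⟨hx, (h'.trans ha2).le⟩ ⟨ha1, ha2.le⟩ h').le
        rw [haL] at h; exact absurd hLx (not_lt.2 h)
      · by_contra hcon
        push_neg at hcon
        have h : gl x ≤ gl b := by
          rcases eq_or_lt_of_le hcon with rfl | h'
          · exact le_rfl
          · exact (hanti (Set.mem_Ici.2 hb1.le) (Set.mem_Ici.2 (hb1.le.trans hcon)) h').le
        rw [hbL] at h; exact absurd hLx (not_lt.2 h)
    · rintro ⟨hax, hxb⟩
      rcases le_or_gt x x₀ with h | h
      · have h2 : gl a < gl x := hmono ⟨ha1, ha2.le⟩ ⟨ha1.trans hax, h⟩ hax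
        rw [haL] at h2; exact h2
      · have h2 : gl b < gl x := hanti (Set.mem_Ici.2 h.le) (Set.mem_Ici.2 hb1.le) hxb
        rw [hbL] at h2; exact h2
end Core

lemma exists_underestimate (μ σ d₂ μt σt : ℝ) (hσ : 0 < σ) (hσt : 0 < σt) (hd₂ : 0 < d₂)
    (hmm : Real.exp (μt + σt^2/2) = Real.exp (μ + σ^2/2) + d₂) :
    ∃ q, d₂ < q ∧ (Real.log q - μt)/σt < (Real.log (q - d₂) - μ)/σ := by
  by_contra H
  push_neg at H
  -- H : ∀ q, d₂ < q → (log (q-d₂) - μ)/σ ≤ (log q - μt)/σt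
  set G : ℝ → ℝ≥0∞ := fun t => ENNReal.ofReal (1 - stdNormalCdf ((Real.log t - μt)/σt))
    with hG
  set F : ℝ → ℝ≥0∞ := fun u => ENNReal.ofReal (1 - stdNormalCdf ((Real.log u - μ)/σ))
    with hF
  have hFmeas : Measurable F := by
    apply Measurable.ennreal_ofReal
    exact (measurable_const.sub
      (phi_measurable.comp ((Real.measurable_log.sub_const μ).div_const σ)))
  have htotal : ∫⁻ t in Set.Ioi (0:ℝ), G t
      = ENNReal.ofReal (Real.exp (μ + σ^2/2) + d₂) := by
    rw [hG, tail_lintegral μt σt hσt, hmm]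
  have hsplit : ∫⁻ t in Set.Ioi (0:ℝ), G t
      = (∫⁻ t in Set.Ioc 0 (d₂/2), G t) + (∫⁻ t in Set.Ioc (d₂/2) d₂, G t)
        + ∫⁻ t in Set.Ioi d₂, G t := by
    have h1 : Set.Ioc (0:ℝ) d₂ ∪ Set.Ioi d₂ = Set.Ioi 0 := Set.Ioc_union_Ioi_eq_Ioi hd₂.le
    have h2 : Set.Ioc (0:ℝ) (d₂/2) ∪ Set.Ioc (d₂/2) d₂ = Set.Ioc 0 d₂ :=
      Set.Ioc_union_Ioc_eq_Ioc (by linarith) (by linarith)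
    have hd1 : Disjoint (Set.Ioc (0:ℝ) d₂) (Set.Ioi d₂) := by
      rw [Set.disjoint_left]; intro x hx hx'; exact absurd (Set.mem_Ioi.1 hx') (not_lt.2 hx.2)
    have hd2 : Disjoint (Set.Ioc (0:ℝ) (d₂/2)) (Set.Ioc (d₂/2) d₂) := by
      rw [Set.disjoint_left]; intro x hx hx'; exact absurd hx'.1 (not_lt.2 hx.2)
    rw [← h1, lintegral_union measurableSet_Ioi hd1, ← h2,
      lintegral_union measurableSet_Ioc hd2]
  set ε := stdNormalCdf ((Real.log (d₂/2) - μt)/σt) with hε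
  have hε0 : 0 < ε := phi_pos _
  have hε1 : ε ≤ 1 := phi_le_one _
  have hA1 : ∫⁻ t in Set.Ioc (0:ℝ) (d₂/2), G t ≤ ENNReal.ofReal (d₂/2) := by
    calc ∫⁻ t in Set.Ioc (0:ℝ) (d₂/2), G t ≤ ∫⁻ _ in Set.Ioc (0:ℝ) (d₂/2), 1 := by
          apply lintegral_mono
          intro t
          exact ENNReal.ofReal_le_one.2 (by linarith [phi_nonneg ((Real.log t - μt)/σt)])
      _ = ENNReal.ofReal (d₂/2) := by
          rw [setLIntegral_one, Real.volume_Ioc]; norm_num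
  have hA2 : ∫⁻ t in Set.Ioc (d₂/2) d₂, G t ≤ ENNReal.ofReal ((1 - ε) * (d₂/2)) := by
    have hb : ∀ t ∈ Set.Ioc (d₂/2) d₂, G t ≤ ENNReal.ofReal (1 - ε) := by
      intro t ht
      apply ENNReal.ofReal_le_ofReal
      have harg : (Real.log (d₂/2) - μt)/σt ≤ (Real.log t - μt)/σt := by
        gcongr
        exact ht.1.le
      have := phi_mono harg
      linarith
    calc ∫⁻ t in Set.Ioc (d₂/2) d₂, G t ≤ ∫⁻ _ in Set.Ioc (d₂/2) d₂, ENNReal.ofReal (1 - ε) :=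
          setLIntegral_mono measurable_const hb
      _ = ENNReal.ofReal (1 - ε) * ENNReal.ofReal (d₂/2) := by
          rw [setLIntegral_const, Real.volume_Ioc]
          congr 1
          ring
      _ = ENNReal.ofReal ((1 - ε) * (d₂/2)) := by
          rw [← ENNReal.ofReal_mul (by linarith)]
  have hB : ∫⁻ t in Set.Ioi d₂, G t ≤ ENNReal.ofReal (Real.exp (μ + σ^2/2)) := by
    have hb : ∀ t ∈ Set.Ioi d₂, G t ≤ F (t - d₂) := by
      intro t ht
      apply ENNReal.ofReal_le_ofReal
      have := phi_mono (H t ht)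
      linarith
    calc ∫⁻ t in Set.Ioi d₂, G t ≤ ∫⁻ t in Set.Ioi d₂, F (t - d₂) :=
          setLIntegral_mono (hFmeas.comp (measurable_sub_const d₂)) hb
      _ = ∫⁻ u in Set.Ioi (0:ℝ), F u := shift_lint d₂ F hFmeas
      _ = ENNReal.ofReal (Real.exp (μ + σ^2/2)) := tail_lintegral μ σ hσ
  have hle : ENNReal.ofReal (Real.exp (μ + σ^2/2) + d₂)
      ≤ ENNReal.ofReal (d₂/2 + (1 - ε) * (d₂/2) + Real.exp (μ + σ^2/2)) := by
    rw [← htotal, hsplit]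
    calc (∫⁻ t in Set.Ioc (0:ℝ) (d₂/2), G t) + (∫⁻ t in Set.Ioc (d₂/2) d₂, G t)
          + ∫⁻ t in Set.Ioi d₂, G t
        ≤ ENNReal.ofReal (d₂/2) + ENNReal.ofReal ((1 - ε) * (d₂/2))
          + ENNReal.ofReal (Real.exp (μ + σ^2/2)) := by
          exact add_le_add (add_le_add hA1 hA2) hB
      _ = ENNReal.ofReal (d₂/2 + (1 - ε) * (d₂/2) + Real.exp (μ + σ^2/2)) := by
          rw [← ENNReal.ofReal_add (by linarith) (by nlinarith),
            ← ENNReal.ofReal_add (by nlinarith) (Real.exp_pos _).le]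
  rw [ENNReal.ofReal_le_ofReal_iff (by nlinarith [Real.exp_pos (μ + σ^2/2)])] at hle
  nlinarith [Real.exp_pos (μ + σ^2/2)]

end Prop2Aux



open Prop2Aux in
/-- Proposition 2: with `A₁` lognormal with parameters `(μ, σ²)`,
`d₂ > 0`, `V* = A₁ + d₂` and moment-matched lognormal parameters `(μ̃, σ̃²)` (so that
`σ̃ < σ`), there are unique `d₁* ∈ (d₂, σd₂/(σ−σ̃))` and `d₁** > σd₂/(σ−σ̃)` with
`f(d₁*) = f(d₁**) = exp(σ̃μ − σμ̃)` where `f(x) = (x − d₂)^σ̃/x^σ`; and for `d₁ > d₂`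
the lognormal model underestimates the limiting default probability of firm 1 under
cross-ownership of debt only, i.e.
`Φ((ln d₁ − μ̃)/σ̃) < Φ((ln(d₁ − d₂) − μ)/σ)`, iff `d₁* < d₁ < d₁**`. -/
theorem proposition_2
    (μ σ d₂ e w μt σt : ℝ) (hσ : 0 < σ) (hd₂ : 0 < d₂)
    (he : e = Real.exp (μ + σ ^ 2 / 2))
    (hw : w = Real.exp (2 * μ + σ ^ 2) * (Real.exp (σ ^ 2) - 1))
    (hμt : μt = (1 / 2) * Real.log ((e + d₂) ^ 4 / (w + (e + d₂) ^ 2)))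
    (hσt : σt = Real.sqrt (Real.log (w / (e + d₂) ^ 2 + 1))) :
    σt < σ ∧
    ∃ a b : ℝ,
      d₂ < a ∧ a < σ * d₂ / (σ - σt) ∧ σ * d₂ / (σ - σt) < b ∧
      (a - d₂) ^ σt / a ^ σ = Real.exp (σt * μ - σ * μt) ∧
      (b - d₂) ^ σt / b ^ σ = Real.exp (σt * μ - σ * μt) ∧
      (∀ a' b' : ℝ, d₂ < a' → a' < σ * d₂ / (σ - σt) → σ * d₂ / (σ - σt) < b' →
        (a' - d₂) ^ σt / a' ^ σ = Real.exp (σt * μ - σ * μt) →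
        (b' - d₂) ^ σt / b' ^ σ = Real.exp (σt * μ - σ * μt) →
        a' = a ∧ b' = b) ∧
      (∀ d₁ : ℝ, d₂ < d₁ →
        (stdNormalCdf ((Real.log d₁ - μt) / σt) <
            stdNormalCdf ((Real.log (d₁ - d₂) - μ) / σ) ↔
          a < d₁ ∧ d₁ < b)) := by
  have he0 : 0 < e := he ▸ Real.exp_pos _
  have hE : 0 < e + d₂ := by linarith
  have hX : 1 < Real.exp (σ ^ 2) := by
    rw [← Real.exp_zero]; exact Real.exp_lt_exp.2 (by positivity)
  have he2 : Real.exp (2 * μ + σ ^ 2) = e ^ 2 := by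
    rw [he, pow_two (Real.exp (μ + σ ^ 2 / 2)), ← Real.exp_add]
    congr 1
    ring
  have hw0 : 0 < w := by rw [hw]; exact mul_pos (Real.exp_pos _) (by linarith)
  have hwe : w = e ^ 2 * (Real.exp (σ ^ 2) - 1) := by rw [hw, he2]
  have hE2pos : (0:ℝ) < (e + d₂) ^ 2 := by positivity
  have hkey : w / (e + d₂) ^ 2 + 1 < Real.exp (σ ^ 2) := by
    have h1 : w / (e + d₂) ^ 2 < Real.exp (σ ^ 2) - 1 := by
      rw [div_lt_iff₀ hE2pos, hwe]
      have hlt2 : e ^ 2 < (e + d₂) ^ 2 := by nlinarith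
      nlinarith [hlt2, hX]
    linarith
  have hdivpos : 0 < w / (e + d₂) ^ 2 := div_pos hw0 hE2pos
  have hvpos : 0 < Real.log (w / (e + d₂) ^ 2 + 1) := Real.log_pos (by linarith)
  have hσt0 : 0 < σt := by rw [hσt]; exact Real.sqrt_pos.2 hvpos
  have hσtsq : σt ^ 2 = Real.log (w / (e + d₂) ^ 2 + 1) := by
    rw [hσt, Real.sq_sqrt hvpos.le]
  have hlt : σt < σ := by
    rw [hσt]
    have h2 : Real.log (w / (e + d₂) ^ 2 + 1) < σ ^ 2 := by
      have h3 := Real.log_lt_log (by linarith) hkey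
      rwa [Real.log_exp] at h3
    calc Real.sqrt (Real.log (w / (e + d₂) ^ 2 + 1)) < Real.sqrt (σ ^ 2) :=
          Real.sqrt_lt_sqrt hvpos.le h2
      _ = σ := Real.sqrt_sq hσ.le
  have hwE : (0:ℝ) < w + (e + d₂) ^ 2 := by linarith
  have hmm' : μt + σt ^ 2 / 2 = Real.log (e + d₂) := by
    rw [hμt, hσtsq]
    have hfrac : w / (e + d₂) ^ 2 + 1 = (w + (e + d₂) ^ 2) / (e + d₂) ^ 2 := by
      field_simp
    have hE4 : (0:ℝ) < (e + d₂) ^ 4 := by positivity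
    rw [hfrac, Real.log_div hwE.ne' hE2pos.ne', Real.log_div hE4.ne' hwE.ne',
      Real.log_pow, Real.log_pow]
    push_cast
    ring
  have hmmexp : Real.exp (μt + σt ^ 2 / 2) = Real.exp (μ + σ ^ 2 / 2) + d₂ := by
    rw [hmm', Real.exp_log hE, he]
  obtain ⟨q, hq, hqlt⟩ := exists_underestimate μ σ d₂ μt σt hσ hσt0 hd₂ hmmexp
  set L := σt * μ - σ * μt with hL
  have hex : ∃ q, d₂ < q ∧ L < σt * Real.log (q - d₂) - σ * Real.log q := by
    refine ⟨q, hq, ?_⟩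
    rw [div_lt_div_iff₀ hσt0 hσ] at hqlt
    linarith [hqlt]
  obtain ⟨a, b, ha1, ha2, hb1, haL, hbL, huniqa, huniqb, hiff⟩ :=
    core hσ hσt0 hlt hd₂ hex
  have hss : (0:ℝ) < σ - σt := sub_pos.2 hlt
  have hd₂x : d₂ < σ * d₂ / (σ - σt) := by rw [lt_div_iff₀ hss]; nlinarith
  have hconv : ∀ x, d₂ < x →
      ((x - d₂) ^ σt / x ^ σ = Real.exp L ↔
        σt * Real.log (x - d₂) - σ * Real.log x = L) := by
    intro x hx
    have hx0 : (0:ℝ) < x := hd₂.trans hx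
    have hxd : (0:ℝ) < x - d₂ := sub_pos.2 hx
    rw [Real.rpow_def_of_pos hxd, Real.rpow_def_of_pos hx0, ← Real.exp_sub,
      Real.exp_eq_exp, mul_comm (Real.log (x - d₂)) σt, mul_comm (Real.log x) σ]
  refine ⟨hlt, a, b, ha1, ha2, hb1, (hconv a ha1).2 haL,
    (hconv b (hd₂x.trans hb1)).2 hbL, ?_, ?_⟩
  · intro a' b' h1 h2 h3 h4 h5
    exact ⟨huniqa a' h1 h2 ((hconv a' h1).1 h4),
      huniqb b' h3 ((hconv b' (hd₂x.trans h3)).1 h5)⟩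
  · intro d₁ hd₁
    constructor
    · intro h
      apply (hiff d₁ hd₁).1
      have h2 := phi_strictMono.lt_iff_lt.1 h
      rw [div_lt_div_iff₀ hσt0 hσ] at h2
      linarith [h2]
    · intro h
      have h2 := (hiff d₁ hd₁).2 h
      apply phi_strictMono
      rw [div_lt_div_iff₀ hσt0 hσ]
      linarith [h2]
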